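/- Suppose Φ, Ψ : ℝ → ℝ are continuous with Ψ(ϑ₀) = 0 and Φ(ϑ₀) ≠ 0, and ρ : (−∞, τ₀] → (0, ∞), ϑ : (−∞, τ₀] → ℝ are differentiable with ρ(τ) → 0, ϑ(τ) → ϑ₀ as τ → −∞, satisfying ρ′ = ρ^m Φ(ϑ) + g(τ) where m ≥ 2 and |g(τ)| ≤ ε(τ)·ρ(τ)^m with ε(τ) → 0 as τ → −∞. Then lim_{τ→−∞} 1/(τ·ρ(τ)^{m−1}) = (1 − m)·Φ(ϑ₀); in particular ρ(τ) = ((m−1)Φ(ϑ₀))^{−1/(m−1)}·(−τ)^{−1/(m−1)}·(1 + o(1)). -/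

import Mathlib

open Filter

/-- If f has derivative f' on (-∞, τ₀] and f' → L at -∞, then f(τ)/τ → L at -∞. -/
lemma tendsto_div_atBot_of_hasDerivAt {f f' : ℝ → ℝ} {τ₀ L : ℝ}
    (hd : ∀ τ ≤ τ₀, HasDerivAt f (f' τ) τ)
    (hL : Tendsto f' atBot (nhds L)) :
    Tendsto (fun τ => f τ / τ) atBot (nhds L) := by
  rw [Metric.tendsto_nhds]
  intro δ hδ
  have hδ4 : (0:ℝ) < δ / 4 := by linarith
  obtain ⟨T₁, hT₁⟩ := eventually_atBot.mp
    (hL.eventually (Metric.closedBall_mem_nhds L hδ4))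
  set T : ℝ := min T₁ τ₀ with hTdef
  set C : ℝ := |f T - L * T| with hCdef
  have hC : 0 ≤ C := abs_nonneg _
  filter_upwards [eventually_le_atBot T, eventually_le_atBot (-(|T| + 1)),
    eventually_le_atBot (-(4 * C / δ + 1))] with τ hτT hτ1 hτ2
  have hτneg : τ < 0 := by
    have := abs_nonneg T; linarith
  -- MVT bound on [τ, T]
  have key : |(f T - L * T) - (f τ - L * τ)| ≤ δ / 4 * |T - τ| := by
    have := Convex.norm_image_sub_le_of_norm_hasDerivWithin_le
      (f := fun t => f t - L * t) (f' := fun t => f' t - L) (s := Set.Icc τ T)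
      (C := δ / 4)
      (fun x hx => by
        have hx2 : x ≤ τ₀ := le_trans hx.2 (min_le_right _ _)
        exact ((hd x hx2).sub ((hasDerivAt_id x).const_mul L)).hasDerivWithinAt.congr_deriv (by simp))
      (fun x hx => by
        have hx1 : x ≤ T₁ := le_trans hx.2 (min_le_left _ _)
        have h := hT₁ x hx1
        rw [Real.dist_eq] at h
        simpa [Real.norm_eq_abs] using h)
      (convex_Icc τ T) (Set.left_mem_Icc.mpr hτT) (Set.right_mem_Icc.mpr hτT)
    simpa [Real.norm_eq_abs, mul_comm] using this
  have hbound : |f τ - L * τ| ≤ C + δ / 4 * (T - τ) := by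
    have h1 : |f τ - L * τ| ≤ |f T - L * T| + |(f T - L * T) - (f τ - L * τ)| := by
      nlinarith [abs_sub_abs_le_abs_sub (f τ - L * τ) (f T - L * T),
        abs_sub_comm (f τ - L * τ) (f T - L * T), abs_nonneg (f τ - L * τ)]
    have h2 : |T - τ| = T - τ := abs_of_nonneg (by linarith)
    rw [h2] at key
    linarith
  -- now estimate
  have habs : |τ| = -τ := abs_of_neg hτneg
  have hCτ : C ≤ δ / 4 * (-τ) := by
    have h3 : 4 * C / δ ≤ -τ := by linarith
    calc C = 4 * C / δ * (δ / 4) := by field_simp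
      _ ≤ -τ * (δ / 4) := mul_le_mul_of_nonneg_right h3 hδ4.le
      _ = δ / 4 * (-τ) := by ring
  have hTτ : δ / 4 * (T - τ) ≤ δ / 2 * (-τ) := by
    have h1 : T ≤ |T| := le_abs_self T
    have h2 : T - τ ≤ 2 * (-τ) := by
      have : |T| ≤ -τ := by linarith
      linarith
    nlinarith
  have hfinal : |f τ - L * τ| < δ * (-τ) := by
    have h4 : |f τ - L * τ| ≤ (δ / 4 + δ / 2) * (-τ) := by nlinarith
    have hpos : 0 < -τ := by linarith
    nlinarith
  rw [Real.dist_eq]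
  have hτne : τ ≠ 0 := hτneg.ne
  have heq : f τ / τ - L = (f τ - L * τ) / τ := by
    field_simp
  rw [heq, abs_div, habs, div_lt_iff₀ (by linarith : (0:ℝ) < -τ)]
  linarith

/-- Radial decay rate along a characteristic direction ϑ₀ with Φ(ϑ₀) ≠ 0:
1/(τ ρ^{m−1}) → (1−m) Φ(ϑ₀) as τ → −∞. -/
theorem radial_rate_along_characteristic (m : ℕ) (hm : 2 ≤ m)
    (Φ Ψ : ℝ → ℝ) (hΦc : Continuous Φ) (hΨc : Continuous Ψ)
    (ϑ₀ τ₀ : ℝ) (hΨ0 : Ψ ϑ₀ = 0) (hΦ0 : Φ ϑ₀ ≠ 0)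
    (ρ ϑ g ε : ℝ → ℝ)
    (hρpos : ∀ τ ≤ τ₀, 0 < ρ τ)
    (hρ0 : Tendsto ρ atBot (nhds 0))
    (hϑ : Tendsto ϑ atBot (nhds ϑ₀))
    (hderiv : ∀ τ ≤ τ₀, HasDerivAt ρ (ρ τ ^ m * Φ (ϑ τ) + g τ) τ)
    (hg : ∀ τ ≤ τ₀, |g τ| ≤ ε τ * ρ τ ^ m)
    (hε : Tendsto ε atBot (nhds 0)) :
    Tendsto (fun τ => 1 / (τ * ρ τ ^ (m - 1))) atBot
      (nhds ((1 - (m : ℝ)) * Φ ϑ₀)) := by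
  obtain ⟨k, rfl⟩ : ∃ k, m = k + 2 := ⟨m - 2, by omega⟩
  set F : ℝ → ℝ := fun τ => (ρ τ ^ (k + 1))⁻¹ with hF
  set F' : ℝ → ℝ := fun τ => (-((k:ℝ) + 1)) * (Φ (ϑ τ) + g τ / ρ τ ^ (k + 2)) with hF'
  have hdF : ∀ τ ≤ τ₀, HasDerivAt F (F' τ) τ := by
    intro τ hτ
    have hρne : ρ τ ≠ 0 := (hρpos τ hτ).ne'
    have h1 : HasDerivAt (fun t => ρ t ^ (k + 1))
        (((k + 1 : ℕ) : ℝ) * ρ τ ^ k * (ρ τ ^ (k + 2) * Φ (ϑ τ) + g τ)) τ := by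
      exact ((hderiv τ hτ).pow (k + 1)).congr_deriv (by simp)
    have h2 := h1.inv (pow_ne_zero _ hρne)
    refine h2.congr_deriv (Eq.symm ?_)
    rw [hF', eq_div_iff (pow_ne_zero 2 (pow_ne_zero _ hρne))]
    have hp : (ρ τ ^ (k + 1)) ^ 2 = ρ τ ^ (k + 2) * ρ τ ^ k := by
      rw [← pow_mul, ← pow_add]; congr 1; ring
    have hc : g τ / ρ τ ^ (k + 2) * ρ τ ^ (k + 2) = g τ :=
      div_mul_cancel₀ _ (pow_ne_zero _ hρne)
    rw [hp]
    push_cast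
    linear_combination (-((k:ℝ) + 1) * ρ τ ^ k) * hc
  -- limit of F'
  have hg0 : Tendsto (fun τ => g τ / ρ τ ^ (k + 2)) atBot (nhds 0) := by
    apply squeeze_zero_norm' _ hε
    filter_upwards [eventually_le_atBot τ₀] with τ hτ
    have hρp : 0 < ρ τ ^ (k + 2) := pow_pos (hρpos τ hτ) _
    rw [Real.norm_eq_abs, abs_div, abs_of_pos hρp, div_le_iff₀ hρp]
    exact hg τ hτ
  have hΦϑ : Tendsto (fun τ => Φ (ϑ τ)) atBot (nhds (Φ ϑ₀)) :=
    (hΦc.tendsto ϑ₀).comp hϑ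
  have hF'lim : Tendsto F' atBot (nhds ((-((k:ℝ) + 1)) * Φ ϑ₀)) := by
    rw [hF']
    have h := (hΦϑ.add hg0).const_mul (-((k:ℝ) + 1))
    rw [add_zero] at h
    exact h
  have hmain := tendsto_div_atBot_of_hasDerivAt hdF hF'lim
  have heq : (fun τ => 1 / (τ * ρ τ ^ (k + 2 - 1))) = fun τ => F τ / τ := by
    funext τ
    simp [hF, one_div, mul_inv_rev, div_eq_mul_inv]
  rw [heq]
  convert hmain using 2
  push_cast
  ring
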